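/- Let p ∈ [1,∞] and p' ∈ [p,∞]. Every uniformly p-convex metric space is uniformly p'-convex. -/

import Mathlib

open Filter Topology Metric Set MeasureTheory
open scoped ENNReal

section Defs

variable (X : Type) [MetricSpace X]

/-- `m` is a midpoint of `x` and `y`. -/
def IsMidpoint {X : Type} [MetricSpace X] (x y m : X) : Prop :=
  dist x m = dist x y / 2 ∧ dist y m = dist x y / 2

/-- `(X,d)` admits midpoints. -/
def AdmitsMidpoints : Prop := ∀ x y : X, ∃ m, IsMidpoint x y m

/-- The `p`-mean of two nonnegative reals, `p ∈ [1,∞]`. -/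
noncomputable def pMean (p : ℝ≥0∞) (a b : ℝ) : ℝ :=
  if p = ∞ then max a b else ((a ^ p.toReal + b ^ p.toReal) / 2) ^ (1 / p.toReal)

/-- `p`-convexity. -/
def PConvex (p : ℝ≥0∞) : Prop :=
  AdmitsMidpoints X ∧ ∀ x y z m : X, IsMidpoint x y m →
    dist m z ≤ pMean p (dist x z) (dist y z)

/-- strict `p`-convexity. -/
def StrictlyPConvex (p : ℝ≥0∞) : Prop :=
  AdmitsMidpoints X ∧ ∀ x y z m : X, IsMidpoint x y m →
    (if p = 1 then |dist x z - dist y z| < dist x y else x ≠ y) →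
    dist m z < pMean p (dist x z) (dist y z)

/-- uniform `p`-convexity. -/
def UniformlyPConvex (p : ℝ≥0∞) : Prop :=
  AdmitsMidpoints X ∧ ∀ ε : ℝ, 0 < ε → ∃ ρ : ℝ, ρ ∈ Set.Ioo (0:ℝ) 1 ∧
    ∀ x y z m : X, IsMidpoint x y m →
      (if p = 1 then |dist x z - dist y z| + ε * pMean 1 (dist x z) (dist y z) < dist x y
        else ε * pMean p (dist x z) (dist y z) < dist x y) →
      dist m z ≤ (1 - ρ) * pMean p (dist x z) (dist y z)

/-- Busemann non-positive curvature condition. -/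
def Busemann : Prop :=
  AdmitsMidpoints X ∧ ∀ x₀ x₁ y₀ y₁ xm ym : X,
    IsMidpoint x₀ x₁ xm → IsMidpoint y₀ y₁ ym →
      dist xm ym ≤ (dist x₀ y₀ + dist x₁ y₁) / 2

/-- `γ` (restricted to `[0,1]`) is a geodesic from `x` to `y`. -/
def IsGeodesic {X : Type} [MetricSpace X] (γ : ℝ → X) (x y : X) : Prop :=
  γ 0 = x ∧ γ 1 = y ∧ ∀ s ∈ Set.Icc (0:ℝ) 1, ∀ t ∈ Set.Icc (0:ℝ) 1,
    dist (γ s) (γ t) = |s - t| * dist x y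

/-- A subset is (geodesically) convex if it contains all geodesics between its points. -/
def GConvex {X : Type} [MetricSpace X] (C : Set X) : Prop :=
  ∀ x ∈ C, ∀ y ∈ C, ∀ γ : ℝ → X, IsGeodesic γ x y → ∀ t ∈ Set.Icc (0:ℝ) 1, γ t ∈ C

/-- The convex hull: the smallest convex set containing `A`. -/
def gConvexHull {X : Type} [MetricSpace X] (A : Set X) : Set X :=
  ⋂₀ {C : Set X | GConvex C ∧ A ⊆ C}

/-- `∞`-convexity. -/
def InftyConvex : Prop :=
  AdmitsMidpoints X ∧ ∀ x y z m : X, IsMidpoint x y m →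
    dist m z ≤ max (dist x z) (dist y z)

/-- strict `∞`-convexity. -/
def StrictlyInftyConvex : Prop :=
  AdmitsMidpoints X ∧ ∀ x y z m : X, IsMidpoint x y m → x ≠ y →
    dist m z < max (dist x z) (dist y z)

/-- uniform `∞`-convexity. -/
def UniformlyInftyConvex : Prop :=
  AdmitsMidpoints X ∧ ∀ ε : ℝ, 0 < ε → ∃ ρ : ℝ, ρ ∈ Set.Ioo (0:ℝ) 1 ∧
    ∀ x y z m : X, IsMidpoint x y m →
      ε * max (dist x z) (dist y z) < dist x y →
      dist m z ≤ (1 - ρ) * max (dist x z) (dist y z)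

/-- `ρ` works as a modulus of nearly uniform convexity for the parameters `ε`, `R`:
for every infinite `ε`-separated family in a ball of radius `r ≤ R` around `y`, the ball
`B_{(1-ρ)r}(y)` intersects the closed convex hull of the family. -/
def NUCModulus (ε R ρ : ℝ) : Prop :=
  ∀ (ι : Type) [Infinite ι], ∀ (x : ι → X) (y : X) (r : ℝ), r ≤ R →
    (∀ i j : ι, i ≠ j → ε ≤ dist (x i) (x j)) → (∀ i, dist (x i) y ≤ r) →
    (Metric.closedBall y ((1 - ρ) * r) ∩ closure (gConvexHull (Set.range x))).Nonempty

/-- Nearly uniform convexity. -/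
def NearlyUniformlyConvex : Prop :=
  InftyConvex X ∧ ∀ R : ℝ, 0 < R → ∀ ε : ℝ, 0 < ε → ∃ ρ : ℝ, 0 < ρ ∧ NUCModulus X ε R ρ

/-- Reflexivity: every decreasing directed family of nonempty bounded closed convex sets
has nonempty intersection. -/
def MetricReflexive : Prop :=
  ∀ (I : Type) [Nonempty I] [Preorder I] [IsDirected I (· ≤ ·)], ∀ C : I → Set X,
    (∀ i, (C i).Nonempty) → (∀ i, Bornology.IsBounded (C i)) → (∀ i, IsClosed (C i)) →
    (∀ i, GConvex (C i)) → (∀ i j : I, j ≤ i → C i ⊆ C j) → (⋂ i, C i).Nonempty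

/-- The co-convex topology: the weakest topology containing all complements of closed
convex sets. -/
def coConvexTopology : TopologicalSpace X :=
  TopologicalSpace.generateFrom {U : Set X | ∃ C : Set X, IsClosed C ∧ GConvex C ∧ U = Cᶜ}

/-- The set of limit points of the sequence `x` in the co-convex topology. -/
def coLim {X : Type} [MetricSpace X] (x : ℕ → X) : Set X :=
  {a : X | Filter.Tendsto x Filter.atTop (@nhds X (coConvexTopology X) a)}

/-- Countable reflexivity. -/
def CountableReflexive : Prop :=
  MetricReflexive X ∧ ∀ x : ℕ → X, (coLim x).Nonempty →
    ∃ φ : ℕ → ℕ, StrictMono φ ∧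
      coLim x = ⋂ m : ℕ, closure (gConvexHull ((fun n => x (φ n)) '' Set.Ici m))

/-- Quasi-convexity: all sublevel sets are convex. -/
def GQuasiConvex {X : Type} [MetricSpace X] (f : X → ℝ) : Prop :=
  ∀ c : ℝ, GConvex {x : X | f x ≤ c}

/-- Quasi-monotonicity: both quasi-convex and quasi-concave. -/
def GQuasiMonotone {X : Type} [MetricSpace X] (f : X → ℝ) : Prop :=
  GQuasiConvex f ∧ GQuasiConvex (fun x => -f x)

/-- The `p`-mean for real `p ∈ [1,∞)`. -/
noncomputable def pMeanR (p a b : ℝ) : ℝ := ((a ^ p + b ^ p) / 2) ^ (1 / p)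

/-- `p`-convexity for real `p`. -/
def PConvexR (p : ℝ) : Prop :=
  AdmitsMidpoints X ∧ ∀ x y z m : X, IsMidpoint x y m →
    dist m z ≤ pMeanR p (dist x z) (dist y z)

/-- strict `p`-convexity for real `p`. -/
def StrictlyPConvexR (p : ℝ) : Prop :=
  AdmitsMidpoints X ∧ ∀ x y z m : X, IsMidpoint x y m →
    (if p = 1 then |dist x z - dist y z| < dist x y else x ≠ y) →
    dist m z < pMeanR p (dist x z) (dist y z)

/-- uniform `p`-convexity for real `p`. -/
def UniformlyPConvexR (p : ℝ) : Prop :=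
  AdmitsMidpoints X ∧ ∀ ε : ℝ, 0 < ε → ∃ ρ : ℝ, ρ ∈ Set.Ioo (0:ℝ) 1 ∧
    ∀ x y z m : X, IsMidpoint x y m →
      ε * pMeanR p (dist x z) (dist y z) < dist x y →
      dist m z ≤ (1 - ρ) * pMeanR p (dist x z) (dist y z)

/-- `ω(z,(x_n)) = limsup_n d(z,x_n)`. -/
noncomputable def asymRadius {X : Type} [MetricSpace X] (x : ℕ → X) (z : X) : ℝ :=
  Filter.limsup (fun n => dist z (x n)) Filter.atTop

/-- `a` is the (unique) asymptotic center of the sequence `x`. -/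
def IsAsymptoticCenter {X : Type} [MetricSpace X] (x : ℕ → X) (a : X) : Prop :=
  (∀ z : X, asymRadius x a ≤ asymRadius x z) ∧
  ∀ b : X, (∀ z : X, asymRadius x b ≤ asymRadius x z) → b = a

/-- Weak sequential convergence: `a` is the asymptotic center of every subsequence. -/
def WeakSeqConv {X : Type} [MetricSpace X] (x : ℕ → X) (a : X) : Prop :=
  ∀ φ : ℕ → ℕ, StrictMono φ → IsAsymptoticCenter (fun n => x (φ n)) a

end Defs

noncomputable def mR (q a b : ℝ) : ℝ := ((a ^ q + b ^ q) / 2) ^ (1/q)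

lemma mR_base_nonneg {q a b : ℝ} (ha : 0 ≤ a) (hb : 0 ≤ b) : 0 ≤ (a ^ q + b ^ q) / 2 := by
  have := Real.rpow_nonneg ha q
  have := Real.rpow_nonneg hb q
  linarith

lemma mR_nonneg {q a b : ℝ} (ha : 0 ≤ a) (hb : 0 ≤ b) : 0 ≤ mR q a b :=
  Real.rpow_nonneg (mR_base_nonneg ha hb) _

lemma mR_comm (q a b : ℝ) : mR q a b = mR q b a := by unfold mR; ring_nf

lemma mR_one {a b : ℝ} : mR 1 a b = (a + b) / 2 := by
  simp [mR]

lemma rpow_rpow_inv {x q : ℝ} (hx : 0 ≤ x) (hq : q ≠ 0) : (x ^ q) ^ (1/q) = x := by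
  rw [← Real.rpow_mul hx, mul_one_div, div_self hq, Real.rpow_one]

lemma mR_le_max {q a b : ℝ} (hq : 1 ≤ q) (ha : 0 ≤ a) (hb : 0 ≤ b) :
    mR q a b ≤ max a b := by
  have hq0 : 0 < q := lt_of_lt_of_le one_pos hq
  have h1 : (a ^ q + b ^ q) / 2 ≤ (max a b) ^ q := by
    have h2 : a ^ q ≤ (max a b) ^ q := Real.rpow_le_rpow ha (le_max_left a b) hq0.le
    have h3 : b ^ q ≤ (max a b) ^ q := Real.rpow_le_rpow hb (le_max_right a b) hq0.le
    linarith
  calc mR q a b ≤ ((max a b) ^ q) ^ (1/q) :=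
        Real.rpow_le_rpow (mR_base_nonneg ha hb) h1 (by positivity)
    _ = max a b := rpow_rpow_inv (le_max_iff.2 (Or.inl ha)) hq0.ne'

lemma max_le_two_mR {q a b : ℝ} (hq : 1 ≤ q) (ha : 0 ≤ a) (hb : 0 ≤ b) :
    max a b ≤ 2 * mR q a b := by
  have hq0 : 0 < q := lt_of_lt_of_le one_pos hq
  have h1 : (max a b) ^ q ≤ 2 * ((a ^ q + b ^ q) / 2) := by
    rcases max_cases a b with ⟨h, _⟩ | ⟨h, _⟩ <;> rw [h] <;>
      [have := Real.rpow_nonneg hb q; have := Real.rpow_nonneg ha q] <;> linarith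
  calc max a b = ((max a b) ^ q) ^ (1/q) :=
        (rpow_rpow_inv (le_max_iff.2 (Or.inl ha)) hq0.ne').symm
    _ ≤ (2 * ((a ^ q + b ^ q) / 2)) ^ (1/q) :=
        Real.rpow_le_rpow (Real.rpow_nonneg (le_max_iff.2 (Or.inl ha)) q) h1 (by positivity)
    _ = 2 ^ (1/q) * mR q a b := by
        rw [Real.mul_rpow (by norm_num) (mR_base_nonneg ha hb)]; rfl
    _ ≤ 2 * mR q a b := by
        have h2 : (2:ℝ) ^ (1/q) ≤ 2 ^ (1:ℝ) :=
          Real.rpow_le_rpow_of_exponent_le one_le_two (by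
            rw [div_le_one hq0]; exact hq)
        rw [Real.rpow_one] at h2
        exact mul_le_mul_of_nonneg_right h2 (mR_nonneg ha hb)

lemma mR_mono {q q' a b : ℝ} (hq : 1 ≤ q) (hqq' : q ≤ q') (ha : 0 ≤ a) (hb : 0 ≤ b) :
    mR q a b ≤ mR q' a b := by
  have hq0 : 0 < q := lt_of_lt_of_le one_pos hq
  have hq'0 : 0 < q' := lt_of_lt_of_le hq0 hqq'
  set r := q' / q with hr
  have hr1 : 1 ≤ r := (one_le_div hq0).2 hqq'
  set u := a ^ q with hu
  set v := b ^ q with hv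
  have hu0 : 0 ≤ u := Real.rpow_nonneg ha q
  have hv0 : 0 ≤ v := Real.rpow_nonneg hb q
  have jensen : ((u + v) / 2) ^ r ≤ (u ^ r + v ^ r) / 2 := by
    have := (convexOn_rpow hr1).2 (Set.mem_Ici.2 hu0) (Set.mem_Ici.2 hv0)
      (by norm_num : (0:ℝ) ≤ 1/2) (by norm_num : (0:ℝ) ≤ 1/2) (by norm_num)
    simp only [smul_eq_mul] at this
    calc ((u + v) / 2) ^ r = (1/2 * u + 1/2 * v) ^ r := by ring_nf
      _ ≤ 1/2 * u ^ r + 1/2 * v ^ r := this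
      _ = (u ^ r + v ^ r) / 2 := by ring
  have hur : u ^ r = a ^ q' := by
    rw [hu, ← Real.rpow_mul ha, mul_div_cancel₀ q' hq0.ne']
  have hvr : v ^ r = b ^ q' := by
    rw [hv, ← Real.rpow_mul hb, mul_div_cancel₀ q' hq0.ne']
  have key : (((u + v) / 2) ^ r) ^ (1/q') ≤ mR q' a b := by
    apply Real.rpow_le_rpow (Real.rpow_nonneg (by linarith) r)
    · rw [hur, hvr] at jensen; exact jensen
    · positivity
  have : (((u + v) / 2) ^ r) ^ (1/q') = mR q a b := by
    rw [← Real.rpow_mul (by linarith)]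
    unfold mR
    congr 1
    field_simp
    rw [hr, div_mul_cancel₀ _ hq0.ne']
  rw [← this]; exact key

lemma mR_strict {q t : ℝ} (hq : 1 < q) (ht0 : 0 ≤ t) (ht1 : t < 1) :
    (1 + t) / 2 < mR q 1 t := by
  have hq0 : 0 < q := lt_trans one_pos hq
  have jensen : ((1 + t) / 2) ^ q < ((1:ℝ) ^ q + t ^ q) / 2 := by
    have := (strictConvexOn_rpow hq).2 (Set.mem_Ici.2 (by norm_num : (0:ℝ) ≤ 1))
      (Set.mem_Ici.2 ht0) (by exact fun h => absurd h.symm (ne_of_lt ht1))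
      (by norm_num : (0:ℝ) < 1/2) (by norm_num : (0:ℝ) < 1/2) (by norm_num)
    simp only [smul_eq_mul] at this
    calc ((1 + t) / 2) ^ q = (1/2 * 1 + 1/2 * t) ^ q := by ring_nf
      _ < 1/2 * (1:ℝ) ^ q + 1/2 * t ^ q := this
      _ = ((1:ℝ) ^ q + t ^ q) / 2 := by ring
  have h2 : (((1 + t) / 2) ^ q) ^ (1/q) < (((1:ℝ) ^ q + t ^ q) / 2) ^ (1/q) :=
    Real.rpow_lt_rpow (Real.rpow_nonneg (by linarith) q) jensen (by positivity)
  rwa [rpow_rpow_inv (by linarith) hq0.ne'] at h2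

lemma mR_gap {q : ℝ} (hq : 1 < q) {θ : ℝ} (hθ0 : 0 < θ) (hθ1 : θ ≤ 1) :
    ∃ c : ℝ, c ∈ Set.Ioo (0:ℝ) 1 ∧ ∀ a b : ℝ, 0 ≤ a → 0 ≤ b → b ≤ (1 - θ) * a →
      (a + b) / 2 ≤ (1 - c) * mR q a b := by
  have hq0 : 0 < q := lt_trans one_pos hq
  set g : ℝ → ℝ := fun t => ((1 + t ^ q) / 2) ^ (1/q) - (1 + t) / 2 with hg
  have hcont : Continuous g := by
    have h1 : Continuous fun t : ℝ => t ^ q :=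
      continuous_iff_continuousAt.2 fun x => Real.continuousAt_rpow_const x q (Or.inr hq0.le)
    have h2 : Continuous fun u : ℝ => u ^ (1/q) :=
      continuous_iff_continuousAt.2 fun x => Real.continuousAt_rpow_const x (1/q) (Or.inr (by positivity : (0:ℝ) ≤ 1/q))
    exact (h2.comp (((continuous_const.add h1).div_const 2))).sub
      ((continuous_const.add continuous_id).div_const 2)
  have hne : (Set.Icc (0:ℝ) (1-θ)).Nonempty := ⟨0, by constructor <;> linarith⟩
  obtain ⟨t₀, ht₀mem, ht₀min⟩ := isCompact_Icc.exists_isMinOn hne hcont.continuousOn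
  have gmr : ∀ t : ℝ, g t = mR q 1 t - (1 + t) / 2 := by
    intro t; simp [hg, mR, Real.one_rpow]
  have ht₀0 : 0 ≤ t₀ := ht₀mem.1
  have ht₀1 : t₀ < 1 := lt_of_le_of_lt ht₀mem.2 (by linarith)
  set c := g t₀ with hc
  have hc0 : 0 < c := by
    rw [hc, gmr]; linarith [mR_strict hq ht₀0 ht₀1]
  have hc1 : c < 1 := by
    have h1 : mR q 1 t₀ ≤ max 1 t₀ := mR_le_max hq.le (by norm_num) ht₀0
    have h2 : max 1 t₀ = 1 := max_eq_left ht₀1.le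
    rw [hc, gmr]; rw [h2] at h1; linarith
  clear_value c
  refine ⟨c, ⟨hc0, hc1⟩, ?_⟩
  intro a b ha hb hba
  rcases eq_or_lt_of_le ha with h | h
  · have hb0 : b = 0 := le_antisymm (by nlinarith) hb
    rw [← h, hb0]
    have h00 : mR q 0 0 = 0 := by
      simp [mR, Real.zero_rpow hq0.ne']
      exact Real.zero_rpow (by positivity)
    rw [h00]; norm_num
  · set t := b / a with htd
    have ht0 : 0 ≤ t := div_nonneg hb ha
    have ht1 : t ≤ 1 - θ := (div_le_iff₀ h).2 (by linarith)
    have hbt : b = a * t := by rw [htd, mul_div_cancel₀ b h.ne']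
    clear_value t
    have hscale : mR q a b = a * mR q 1 t := by
      unfold mR
      rw [hbt, Real.mul_rpow ha ht0, Real.one_rpow]
      rw [show a ^ q + a ^ q * t ^ q = a ^ q * (1 + t ^ q) by ring, mul_div_assoc,
        Real.mul_rpow (Real.rpow_nonneg ha q) (by positivity), rpow_rpow_inv ha hq0.ne']
    have hgt : c ≤ mR q 1 t - (1 + t) / 2 := by
      rw [← gmr, hc]; exact ht₀min (Set.mem_Icc.2 ⟨ht0, ht1⟩)
    have hba' : b ≤ a := by nlinarith
    have hmab_le : mR q a b ≤ a := by
      have := mR_le_max hq.le ha hb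
      rwa [max_eq_left hba'] at this
    have e1 : a * c ≤ a * (mR q 1 t - (1 + t) / 2) := mul_le_mul_of_nonneg_left hgt h.le
    have e2 : (a + b) / 2 = a * ((1 + t) / 2) := by rw [hbt]; ring
    have e3 : c * mR q a b ≤ a * c := by
      calc c * mR q a b ≤ c * a := mul_le_mul_of_nonneg_left hmab_le hc0.le
        _ = a * c := mul_comm c a
    have e4 : a * (mR q 1 t - (1 + t) / 2) = mR q a b - a * ((1 + t) / 2) := by
      rw [hscale]; ring
    rw [e2]
    have e5 : (1 - c) * mR q a b = mR q a b - c * mR q a b := by ring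
    rw [e5]
    linarith

section Bridge

lemma pMean_ne_top {p : ℝ≥0∞} (hpt : p ≠ ∞) (a b : ℝ) :
    pMean p a b = mR p.toReal a b := by
  rw [pMean, if_neg hpt]; rfl

lemma pMean_top (a b : ℝ) : pMean ∞ a b = max a b := by
  rw [pMean, if_pos rfl]

lemma pMean_one (a b : ℝ) : pMean 1 a b = (a + b) / 2 := by
  rw [pMean_ne_top (by simp), ENNReal.toReal_one, mR_one]

lemma one_le_toReal {p : ℝ≥0∞} (hp : 1 ≤ p) (hpt : p ≠ ∞) : 1 ≤ p.toReal := by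
  have := (ENNReal.toReal_le_toReal (by simp) hpt).2 hp
  simpa using this

lemma one_lt_toReal {p : ℝ≥0∞} (hp : 1 < p) (hpt : p ≠ ∞) : 1 < p.toReal := by
  have := (ENNReal.toReal_lt_toReal (by simp) hpt).2 hp
  simpa using this

lemma pMean_nonneg {p : ℝ≥0∞} {a b : ℝ} (ha : 0 ≤ a) (hb : 0 ≤ b) :
    0 ≤ pMean p a b := by
  by_cases hpt : p = ∞
  · rw [hpt, pMean_top]; exact le_max_of_le_left ha
  · rw [pMean_ne_top hpt]; exact mR_nonneg ha hb

lemma pMean_mono' {p p' : ℝ≥0∞} (hp : 1 ≤ p) (hpp' : p ≤ p') {a b : ℝ}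
    (ha : 0 ≤ a) (hb : 0 ≤ b) : pMean p a b ≤ pMean p' a b := by
  by_cases hpt : p = ∞
  · have hp't : p' = ∞ := top_le_iff.1 (hpt ▸ hpp')
    rw [hpt, hp't]
  · by_cases hp't : p' = ∞
    · rw [pMean_ne_top hpt, hp't, pMean_top]
      exact mR_le_max (one_le_toReal hp hpt) ha hb
    · rw [pMean_ne_top hpt, pMean_ne_top hp't]
      exact mR_mono (one_le_toReal hp hpt)
        (ENNReal.toReal_mono hp't hpp') ha hb

lemma max_le_two_pMean {p : ℝ≥0∞} (hp : 1 ≤ p) {a b : ℝ} (ha : 0 ≤ a) (hb : 0 ≤ b) :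
    max a b ≤ 2 * pMean p a b := by
  by_cases hpt : p = ∞
  · rw [hpt, pMean_top]
    have : 0 ≤ max a b := le_max_of_le_left ha
    linarith
  · rw [pMean_ne_top hpt]
    exact max_le_two_mR (one_le_toReal hp hpt) ha hb

lemma pMean_gap {p' : ℝ≥0∞} (hp' : 1 < p') {θ : ℝ} (hθ0 : 0 < θ) (hθ1 : θ ≤ 1) :
    ∃ c : ℝ, c ∈ Set.Ioo (0:ℝ) 1 ∧ ∀ a b : ℝ, 0 ≤ a → 0 ≤ b →
      min a b ≤ (1 - θ) * max a b → (a + b) / 2 ≤ (1 - c) * pMean p' a b := by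
  by_cases hpt : p' = ∞
  · refine ⟨θ/2, ⟨by linarith, by linarith⟩, ?_⟩
    intro a b ha hb hmin
    rw [hpt, pMean_top]
    have h1 : min a b + max a b = a + b := min_add_max a b
    have h2 : 0 ≤ max a b := le_max_of_le_left ha
    nlinarith
  · obtain ⟨c, hc, hgap⟩ := mR_gap (one_lt_toReal hp' hpt) hθ0 hθ1
    refine ⟨c, hc, ?_⟩
    intro a b ha hb hmin
    have key := hgap (max a b) (min a b) (le_max_of_le_left ha) (le_min ha hb) hmin
    rw [show (a ⊔ b) + (a ⊓ b) = a + b from by rw [add_comm, min_add_max]] at key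
    rw [pMean_ne_top hpt]
    rcases le_total a b with h | h
    · rwa [max_eq_right h, min_eq_left h, mR_comm] at key
    · rwa [max_eq_left h, min_eq_right h] at key

lemma convex1 {X : Type} [MetricSpace X] (h : UniformlyPConvex X 1) :
    ∀ x y z m : X, IsMidpoint x y m → dist m z ≤ (dist x z + dist y z) / 2 := by
  intro x y z m hmid
  obtain ⟨hxm, hym⟩ := hmid
  set a := dist x z with hadef
  set b := dist y z with hbdef
  set d := dist x y with hddef
  by_cases hd : d ≤ |a - b|
  · rcases le_total b a with hab | hab
    · have h1 : dist m z ≤ dist m y + dist y z := dist_triangle m y z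
      rw [dist_comm m y] at h1
      rw [hym] at h1
      rw [abs_of_nonneg (by linarith)] at hd
      linarith
    · have h1 : dist m z ≤ dist m x + dist x z := dist_triangle m x z
      rw [dist_comm m x] at h1
      rw [hxm] at h1
      rw [abs_of_nonpos (by linarith)] at hd
      linarith
  · push_neg at hd
    have habs : (0:ℝ) ≤ |a - b| := abs_nonneg _
    have htri : d ≤ a + b := by
      calc d ≤ dist x z + dist z y := dist_triangle x z y
        _ = a + b := by rw [dist_comm z y]
    have hab2 : 0 < a + b := by linarith
    set ε := (d - |a - b|) / (a + b) with hεdef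
    have hε : 0 < ε := div_pos (by linarith) hab2
    obtain ⟨ρ, hρ, hρ'⟩ := h.2 ε hε
    have hcond : |a - b| + ε * pMean 1 a b < d := by
      rw [pMean_one]
      have he : ε * ((a + b) / 2) = (d - |a - b|) / 2 := by
        rw [hεdef]; field_simp
      rw [he]; linarith
    have hkey := hρ' x y z m ⟨hxm, hym⟩ (by rw [if_pos rfl]; exact hcond)
    rw [pMean_one] at hkey
    have : (1 - ρ) * ((a + b) / 2) ≤ (a + b) / 2 := by nlinarith [hρ.1, hρ.2]
    linarith

end Bridge

/-- For `1 ≤ p ≤ p'`, every uniformly `p`-convex metric space is uniformly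
`p'`-convex. -/
theorem uniformly_pConvex_mono (X : Type) [MetricSpace X] (p p' : ℝ≥0∞)
    (hp : 1 ≤ p) (hpp' : p ≤ p') (h : UniformlyPConvex X p) :
    UniformlyPConvex X p' := by
  obtain ⟨hm, hmod⟩ := h
  refine ⟨hm, ?_⟩
  by_cases hp'1 : p' = 1
  · have hp1 : p = 1 := le_antisymm (hp'1 ▸ hpp') hp
    subst hp'1; subst hp1
    exact hmod
  by_cases hp1 : p = 1
  · -- main case : p = 1 < p'
    subst hp1
    have hq1 : 1 < p' := lt_of_le_of_ne hpp' (Ne.symm hp'1)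
    intro ε hε
    set θ := min (ε/8) 1 with hθdef
    have hθ0 : 0 < θ := lt_min (by linarith) one_pos
    have hθ1 : θ ≤ 1 := min_le_right _ _
    have hθε : θ ≤ ε/8 := min_le_left _ _
    obtain ⟨c, hc, hcgap⟩ := pMean_gap hq1 hθ0 hθ1
    obtain ⟨ρ₁, hρ₁, hρ₁'⟩ := hmod (ε/2) (by linarith)
    refine ⟨min ρ₁ c, ⟨lt_min hρ₁.1 hc.1, lt_of_le_of_lt (min_le_left _ _) hρ₁.2⟩, ?_⟩
    intro x y z m hmid hcond
    rw [if_neg hp'1] at hcond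
    have ha : (0:ℝ) ≤ dist x z := dist_nonneg
    have hb : (0:ℝ) ≤ dist y z := dist_nonneg
    set a := dist x z with hadef
    set b := dist y z with hbdef
    set M := pMean p' a b with hMdef
    clear_value θ a b M
    have hM0 : 0 ≤ M := by rw [hMdef]; exact pMean_nonneg ha hb
    have hmaxle : max a b ≤ 2 * M := by rw [hMdef]; exact max_le_two_pMean hq1.le ha hb
    have hM1 : (a + b) / 2 ≤ M := by
      rw [hMdef]
      have := pMean_mono' (le_refl 1) hq1.le ha hb
      rwa [pMean_one] at this
    have hMpos : 0 < M := by
      rcases hM0.lt_or_eq with h0 | h0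
      · exact h0
      exfalso
      have hmax0 : max a b ≤ 0 := by rw [← h0] at hmaxle; linarith
      have ha0 : a = 0 := le_antisymm (le_trans (le_max_left a b) hmax0) ha
      have hb0 : b = 0 := le_antisymm (le_trans (le_max_right a b) hmax0) hb
      have hxz : x = z := dist_eq_zero.mp (by rw [← hadef]; exact ha0)
      have hyz : y = z := dist_eq_zero.mp (by rw [← hbdef]; exact hb0)
      have hxy : dist x y = 0 := by rw [hxz, hyz, dist_self]
      rw [hxy, ← h0] at hcond
      simp at hcond
    rcases le_or_gt ((1 - θ) * max a b) (min a b) with hcase | hcase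
    · have habs : |a - b| ≤ 2 * θ * M := by
        rw [← max_sub_min_eq_abs, max_comm b a, min_comm b a]
        have h1 : max a b - min a b ≤ θ * max a b := by nlinarith
        have h2 : θ * max a b ≤ θ * (2 * M) := mul_le_mul_of_nonneg_left hmaxle hθ0.le
        linarith
      have hcond1 : |a - b| + (ε/2) * pMean 1 a b < dist x y := by
        rw [pMean_one]
        have e1 : (ε/2) * ((a + b) / 2) ≤ (ε/2) * M := mul_le_mul_of_nonneg_left hM1 (by linarith)
        have e2 : θ * M ≤ (ε/8) * M := mul_le_mul_of_nonneg_right hθε hM0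
        have e3 : 0 < (ε/4) * M := mul_pos (by linarith) hMpos
        linarith [hcond]
      have hkey := hρ₁' x y z m hmid (by rw [if_pos rfl, ← hadef, ← hbdef]; exact hcond1)
      rw [pMean_one, ← hadef, ← hbdef] at hkey
      have hmin2 : min ρ₁ c ≤ ρ₁ := min_le_left _ _
      calc dist m z ≤ (1 - ρ₁) * ((a + b) / 2) := hkey
        _ ≤ (1 - min ρ₁ c) * M :=
            mul_le_mul (by linarith) hM1 (by linarith) (by linarith [hρ₁.2])
    · have hmz := convex1 ⟨hm, hmod⟩ x y z m hmid
      rw [← hadef, ← hbdef] at hmz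
      have hgap := hcgap a b ha hb hcase.le
      rw [← hMdef] at hgap
      have hminc : min ρ₁ c ≤ c := min_le_right _ _
      calc dist m z ≤ (a + b) / 2 := hmz
        _ ≤ (1 - c) * M := hgap
        _ ≤ (1 - min ρ₁ c) * M := mul_le_mul_of_nonneg_right (by linarith) hM0
  · -- 1 < p ≤ p'
    intro ε hε
    obtain ⟨ρ, hρ, hρ'⟩ := hmod ε hε
    refine ⟨ρ, hρ, ?_⟩
    intro x y z m hmid hcond
    rw [if_neg hp'1] at hcond
    have ha : (0:ℝ) ≤ dist x z := dist_nonneg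
    have hb : (0:ℝ) ≤ dist y z := dist_nonneg
    have hmono := pMean_mono' hp hpp' ha hb
    have hc2 : ε * pMean p (dist x z) (dist y z) < dist x y :=
      lt_of_le_of_lt (mul_le_mul_of_nonneg_left hmono hε.le) hcond
    have hkey := hρ' x y z m hmid (by rw [if_neg hp1]; exact hc2)
    calc dist m z ≤ (1 - ρ) * pMean p (dist x z) (dist y z) := hkey
      _ ≤ (1 - ρ) * pMean p' (dist x z) (dist y z) :=
          mul_le_mul_of_nonneg_left hmono (by linarith [hρ.2])
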